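/- Let s ∈ (1/2, 1). There exists a constant C > 0 such that for every bounded continuous 2π-periodic function u : ℝ → ℝⁿ with N_s(u) < ∞ and every G ∈ C¹(ℝⁿ; ℝⁿ) with ‖G_u‖_{C¹} := sup{ |G(x)| + |∇G(x)| : |x| ≤ ‖u‖_{L^∞} } < ∞, one has N_s(G ∘ u) ≤ C ‖G_u‖_{C¹} (1 + N_s(u)). -/

import Mathlib

open MeasureTheory Real ENNReal

/-- The squared `L²` norm over one period `[0,2π]`. -/
noncomputable def l2sq {n : ℕ} (v : ℝ → EuclideanSpace ℝ (Fin n)) : ℝ≥0∞ :=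
  ∫⁻ x in Set.Ioc (0 : ℝ) (2 * π), ENNReal.ofReal (‖v x‖ ^ 2)

/-- The Slobodeckij-type norm
`N_s(v) = ‖v‖_{L²} + (∫₀¹ [t^{-s} sup_{|h|<t} ‖v - τ_h v‖_{L²}]² dt/t)^{1/2}`. -/
noncomputable def slobNorm {n : ℕ} (s : ℝ) (v : ℝ → EuclideanSpace ℝ (Fin n)) : ℝ≥0∞ :=
  l2sq v ^ (1 / 2 : ℝ) +
    (∫⁻ t in Set.Ioc (0 : ℝ) 1,
        (ENNReal.ofReal (t ^ (-s)) *
            ⨆ h ∈ Set.Ioo (-t) t, l2sq (fun x => v x - v (x - h)) ^ (1 / 2 : ℝ)) ^ 2 /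
          ENNReal.ofReal t) ^ (1 / 2 : ℝ)

/-- `‖G_u‖_{C¹} = sup { |G(x)| + |∇G(x)| : |x| ≤ R }`. -/
noncomputable def C1normOn {n : ℕ}
    (G : EuclideanSpace ℝ (Fin n) → EuclideanSpace ℝ (Fin n)) (R : ℝ) : ℝ :=
  ⨆ x ∈ {y : EuclideanSpace ℝ (Fin n) | ‖y‖ ≤ R}, (‖G x‖ + ‖fderiv ℝ G x‖)

/-- Composition estimate in fractional Sobolev norm:
`N_s(G ∘ u) ≤ C ‖G_u‖_{C¹} (1 + N_s(u))`. -/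
theorem stmt_2 (s : ℝ) (hs : s ∈ Set.Ioo (1 / 2 : ℝ) 1) (n : ℕ) :
    ∃ C > 0, ∀ (u : ℝ → EuclideanSpace ℝ (Fin n))
      (G : EuclideanSpace ℝ (Fin n) → EuclideanSpace ℝ (Fin n)),
      Continuous u → Function.Periodic u (2 * π) → slobNorm s u ≠ ⊤ →
      ContDiff ℝ 1 G →
      slobNorm s (fun x => G (u x)) ≤
        ENNReal.ofReal (C * C1normOn G (⨆ x, ‖u x‖)) * (1 + slobNorm s u) := by
  refine ⟨1 + Real.sqrt (2 * π), by positivity, ?_⟩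
  intro u G hu hper _ hG
  set R := ⨆ x, ‖u x‖ with hRdef
  set M := C1normOn G R with hMdef
  have h2π : (0:ℝ) < 2 * π := by positivity
  -- boundedness of u
  have hbdd : BddAbove (Set.range fun x => ‖u x‖) := by
    have hc : IsCompact ((fun x => ‖u x‖) '' Set.Icc 0 (2*π)) :=
      isCompact_Icc.image hu.norm
    refine BddAbove.mono ?_ hc.bddAbove
    rintro _ ⟨x, rfl⟩
    obtain ⟨y, hy, hxy⟩ := hper.exists_mem_Ico₀ h2π x
    exact ⟨y, ⟨hy.1, hy.2.le⟩, (congrArg norm hxy).symm⟩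
  have hRu : ∀ x, ‖u x‖ ≤ R := fun x => le_ciSup hbdd x
  have hR0 : 0 ≤ R := le_trans (norm_nonneg _) (hRu 0)
  -- boundedness of G and its derivative on the ball
  have hfc : Continuous fun x : EuclideanSpace ℝ (Fin n) => ‖G x‖ + ‖fderiv ℝ G x‖ :=
    hG.continuous.norm.add (hG.continuous_fderiv one_ne_zero).norm
  have hSeq : {y : EuclideanSpace ℝ (Fin n) | ‖y‖ ≤ R} = Metric.closedBall 0 R := by
    ext y; simp [Metric.mem_closedBall, dist_zero_right]
  have hSbdd : BddAbove ((fun x : EuclideanSpace ℝ (Fin n) => ‖G x‖ + ‖fderiv ℝ G x‖) ''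
      Metric.closedBall 0 R) := ((isCompact_closedBall _ _).image hfc).bddAbove
  obtain ⟨B, hB⟩ := hSbdd
  have hM_bdd : BddAbove (Set.range fun x : EuclideanSpace ℝ (Fin n) =>
      ⨆ _ : x ∈ {y : EuclideanSpace ℝ (Fin n) | ‖y‖ ≤ R}, (‖G x‖ + ‖fderiv ℝ G x‖)) := by
    refine ⟨max B 0, ?_⟩
    rintro _ ⟨x, rfl⟩
    dsimp only
    by_cases hx : x ∈ {y : EuclideanSpace ℝ (Fin n) | ‖y‖ ≤ R}
    · rw [ciSup_pos hx]
      exact le_max_of_le_left (hB ⟨x, by rwa [← hSeq], rfl⟩)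
    · haveI : IsEmpty (x ∈ {y : EuclideanSpace ℝ (Fin n) | ‖y‖ ≤ R}) := ⟨fun h => hx h⟩
      rw [Real.iSup_of_isEmpty]
      exact le_max_right _ _
  have hMf : ∀ y, ‖y‖ ≤ R → ‖G y‖ + ‖fderiv ℝ G y‖ ≤ M := by
    intro y hy
    have h1 := le_ciSup hM_bdd y
    rwa [ciSup_pos (show y ∈ {y : EuclideanSpace ℝ (Fin n) | ‖y‖ ≤ R} from hy)] at h1
  have hM0 : 0 ≤ M := le_trans (by positivity) (hMf 0 (by simpa using hR0))
  have hGM : ∀ y, ‖y‖ ≤ R → ‖G y‖ ≤ M := fun y hy =>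
    le_trans (le_add_of_nonneg_right (norm_nonneg _)) (hMf y hy)
  have hDM : ∀ y ∈ Metric.closedBall (0 : EuclideanSpace ℝ (Fin n)) R, ‖fderiv ℝ G y‖ ≤ M := by
    intro y hy
    exact le_trans (le_add_of_nonneg_left (norm_nonneg _)) (hMf y
      (by simpa [Metric.mem_closedBall, dist_zero_right] using hy))
  have hLip : ∀ a b : EuclideanSpace ℝ (Fin n), ‖a‖ ≤ R → ‖b‖ ≤ R → ‖G a - G b‖ ≤ M * ‖a - b‖ := by
    intro a b ha hb
    exact (convex_closedBall (0 : EuclideanSpace ℝ (Fin n)) R).norm_image_sub_le_of_norm_fderiv_le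
      (fun x _ => hG.differentiable one_ne_zero x) hDM
      (by simpa [Metric.mem_closedBall, dist_zero_right] using hb)
      (by simpa [Metric.mem_closedBall, dist_zero_right] using ha)
  -- sqrt helper
  have hsq : ∀ c : ℝ, 0 ≤ c → (ENNReal.ofReal (c^2)) ^ (1/2 : ℝ) = ENNReal.ofReal c := by
    intro c hc
    rw [ENNReal.ofReal_rpow_of_nonneg (by positivity : (0:ℝ) ≤ c^2) (by norm_num : (0:ℝ) ≤ 1/2)]
    congr 1
    rw [← Real.rpow_natCast c 2, ← Real.rpow_mul hc]
    norm_num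
  -- first term bound
  have key1 : l2sq (fun x => G (u x)) ≤ ENNReal.ofReal (M^2) * ENNReal.ofReal (2*π) := by
    rw [l2sq]
    calc ∫⁻ x in Set.Ioc (0:ℝ) (2*π), ENNReal.ofReal (‖G (u x)‖^2)
        ≤ ∫⁻ _ in Set.Ioc (0:ℝ) (2*π), ENNReal.ofReal (M^2) :=
          lintegral_mono fun x => ENNReal.ofReal_le_ofReal (by
            have h1 := hGM (u x) (hRu x)
            nlinarith [norm_nonneg (G (u x))])
      _ = ENNReal.ofReal (M^2) * ENNReal.ofReal (2*π) := by
          rw [setLIntegral_const, Real.volume_Ioc, sub_zero]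
  -- difference bound
  have key2 : ∀ h : ℝ, l2sq (fun x => G (u x) - G (u (x - h))) ≤
      ENNReal.ofReal (M^2) * l2sq (fun x => u x - u (x - h)) := by
    intro h
    rw [l2sq, l2sq, ← lintegral_const_mul' _ _ ENNReal.ofReal_ne_top]
    refine lintegral_mono fun x => ?_
    rw [← ENNReal.ofReal_mul (by positivity)]
    refine ENNReal.ofReal_le_ofReal ?_
    have hl := hLip (u x) (u (x - h)) (hRu x) (hRu _)
    nlinarith [norm_nonneg (G (u x) - G (u (x - h))), norm_nonneg (u x - u (x - h)),
      mul_nonneg hM0 (norm_nonneg (u x - u (x - h)))]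
  -- sup bound
  have key3 : ∀ t : ℝ,
      (ENNReal.ofReal (t ^ (-s)) *
          ⨆ h ∈ Set.Ioo (-t) t, l2sq (fun x => G (u x) - G (u (x - h))) ^ (1/2:ℝ)) ^ 2 /
        ENNReal.ofReal t
      ≤ ENNReal.ofReal (M^2) *
        ((ENNReal.ofReal (t ^ (-s)) *
            ⨆ h ∈ Set.Ioo (-t) t, l2sq (fun x => u x - u (x - h)) ^ (1/2:ℝ)) ^ 2 /
          ENNReal.ofReal t) := by
    intro t
    have hsup : (⨆ h ∈ Set.Ioo (-t) t, l2sq (fun x => G (u x) - G (u (x - h))) ^ (1/2:ℝ))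
        ≤ ENNReal.ofReal M * ⨆ h ∈ Set.Ioo (-t) t, l2sq (fun x => u x - u (x - h)) ^ (1/2:ℝ) := by
      refine iSup₂_le fun h hh => ?_
      calc l2sq (fun x => G (u x) - G (u (x - h))) ^ (1/2:ℝ)
          ≤ (ENNReal.ofReal (M^2) * l2sq (fun x => u x - u (x - h))) ^ (1/2:ℝ) :=
            ENNReal.rpow_le_rpow (key2 h) (by norm_num)
        _ = ENNReal.ofReal M * l2sq (fun x => u x - u (x - h)) ^ (1/2:ℝ) := by
            rw [ENNReal.mul_rpow_of_nonneg _ _ (by norm_num), hsq M hM0]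
        _ ≤ _ := mul_le_mul_right (le_iSup₂ (f := fun h _ =>
            l2sq (fun x => u x - u (x - h)) ^ (1/2:ℝ)) h hh) _
    calc (ENNReal.ofReal (t ^ (-s)) *
            ⨆ h ∈ Set.Ioo (-t) t, l2sq (fun x => G (u x) - G (u (x - h))) ^ (1/2:ℝ)) ^ 2 /
          ENNReal.ofReal t
        ≤ (ENNReal.ofReal (t ^ (-s)) * (ENNReal.ofReal M *
            ⨆ h ∈ Set.Ioo (-t) t, l2sq (fun x => u x - u (x - h)) ^ (1/2:ℝ))) ^ 2 /
          ENNReal.ofReal t :=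
          ENNReal.div_le_div_right (pow_le_pow_left' (mul_le_mul_right hsup _) 2) _
      _ = ENNReal.ofReal (M^2) *
          ((ENNReal.ofReal (t ^ (-s)) *
              ⨆ h ∈ Set.Ioo (-t) t, l2sq (fun x => u x - u (x - h)) ^ (1/2:ℝ)) ^ 2 /
            ENNReal.ofReal t) := by
          rw [mul_left_comm, mul_pow, mul_div_assoc, ENNReal.ofReal_pow hM0]
  -- put it together
  set Iu := ∫⁻ t in Set.Ioc (0:ℝ) 1,
      (ENNReal.ofReal (t ^ (-s)) *
          ⨆ h ∈ Set.Ioo (-t) t, l2sq (fun x => u x - u (x - h)) ^ (1/2:ℝ)) ^ 2 /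
        ENNReal.ofReal t with hIu
  have key4 : (∫⁻ t in Set.Ioc (0:ℝ) 1,
      (ENNReal.ofReal (t ^ (-s)) *
          ⨆ h ∈ Set.Ioo (-t) t, l2sq (fun x => G (u x) - G (u (x - h))) ^ (1/2:ℝ)) ^ 2 /
        ENNReal.ofReal t) ≤ ENNReal.ofReal (M^2) * Iu := by
    rw [hIu, ← lintegral_const_mul' _ _ ENNReal.ofReal_ne_top]
    exact lintegral_mono fun t => key3 t
  have hterm2 : (∫⁻ t in Set.Ioc (0:ℝ) 1,
      (ENNReal.ofReal (t ^ (-s)) *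
          ⨆ h ∈ Set.Ioo (-t) t, l2sq (fun x => G (u x) - G (u (x - h))) ^ (1/2:ℝ)) ^ 2 /
        ENNReal.ofReal t) ^ (1/2:ℝ) ≤ ENNReal.ofReal M * Iu ^ (1/2:ℝ) := by
    calc _ ≤ (ENNReal.ofReal (M^2) * Iu) ^ (1/2:ℝ) := ENNReal.rpow_le_rpow key4 (by norm_num)
      _ = ENNReal.ofReal M * Iu ^ (1/2:ℝ) := by
          rw [ENNReal.mul_rpow_of_nonneg _ _ (by norm_num), hsq M hM0]
  have hterm1 : l2sq (fun x => G (u x)) ^ (1/2:ℝ) ≤ ENNReal.ofReal (M * Real.sqrt (2*π)) := by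
    calc _ ≤ (ENNReal.ofReal (M^2) * ENNReal.ofReal (2*π)) ^ (1/2:ℝ) :=
          ENNReal.rpow_le_rpow key1 (by norm_num)
      _ = ENNReal.ofReal (M * Real.sqrt (2*π)) := by
          rw [ENNReal.mul_rpow_of_nonneg _ _ (by norm_num), hsq M hM0,
            show (2*π) = (Real.sqrt (2*π))^2 from (Real.sq_sqrt h2π.le).symm,
            hsq _ (Real.sqrt_nonneg _), ← ENNReal.ofReal_mul hM0]
          rw [Real.sq_sqrt h2π.le]
  have hIu_le : Iu ^ (1/2:ℝ) ≤ slobNorm s u := le_add_self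
  calc slobNorm s (fun x => G (u x))
      ≤ ENNReal.ofReal (M * Real.sqrt (2*π)) + ENNReal.ofReal M * Iu ^ (1/2:ℝ) := by
        rw [slobNorm]
        exact add_le_add hterm1 hterm2
    _ ≤ ENNReal.ofReal ((1 + Real.sqrt (2*π)) * M) * 1 +
        ENNReal.ofReal ((1 + Real.sqrt (2*π)) * M) * slobNorm s u := by
        refine add_le_add ?_ (mul_le_mul' (ENNReal.ofReal_le_ofReal
          (by nlinarith [mul_nonneg (Real.sqrt_nonneg (2*π)) hM0])) hIu_le)
        rw [mul_one]
        exact ENNReal.ofReal_le_ofReal (by nlinarith [hM0, Real.sqrt_nonneg (2*π)])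
    _ = ENNReal.ofReal ((1 + Real.sqrt (2*π)) * M) * (1 + slobNorm s u) := by
        rw [mul_add]
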